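/- Let Φ be a homogeneous Poisson point process on (0,∞) with intensity λ, with i.i.d. marks h_i that are exponentially distributed with rate μ, independent of Φ. Then tan θ := sup_i h_i/x_i follows a Fréchet distribution with shape parameter 1 and scale ρ = λ/μ, i.e., P[tan θ ≤ t] = exp(−ρ/t) for t > 0. -/

import Mathlib

open MeasureTheory ProbabilityTheory Real Set

open Filter
open scoped ENNReal NNReal Topology

namespace BlockageAux

lemma exponentialPDFReal_eq' (r x : ℝ) :
    exponentialPDFReal r x = if 0 ≤ x then r * Real.exp (-(r * x)) else 0 := by
  rw [exponentialPDFReal, gammaPDFReal]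
  simp only [rpow_one, Real.Gamma_one, div_one, sub_self, rpow_zero, mul_one]

lemma expMeasure_Iic {r : ℝ} (hr : 0 < r) (b : ℝ) :
    expMeasure r (Iic b) = ENNReal.ofReal (if 0 ≤ b then 1 - Real.exp (-(r * b)) else 0) := by
  rw [show expMeasure r = volume.withDensity (exponentialPDF r) from rfl,
    withDensity_apply _ measurableSet_Iic]
  exact lintegral_exponentialPDF_eq_antiDeriv hr b

lemma expMeasure_Iio_zero (r : ℝ) : expMeasure r (Iio 0) = 0 := by
  rw [show expMeasure r = volume.withDensity (exponentialPDF r) from rfl,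
    withDensity_apply _ measurableSet_Iio]
  exact lintegral_exponentialPDF_of_nonpos le_rfl

lemma expMeasure_ae_nonneg (r : ℝ) : ∀ᵐ s ∂(expMeasure r), 0 ≤ s := by
  rw [ae_iff]
  have : {s : ℝ | ¬ 0 ≤ s} = Iio 0 := by ext s; simp
  rw [this]; exact expMeasure_Iio_zero r

lemma integral_expMeasure {r : ℝ} (hr : 0 < r) (f : ℝ → ℝ) :
    ∫ s, f s ∂(expMeasure r) = ∫ s in Ioi (0:ℝ), (r * Real.exp (-(r * s))) * f s := by
  have h1 : expMeasure r
      = volume.withDensity (fun x => ((exponentialPDFReal r x).toNNReal : ℝ≥0∞)) := rfl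
  rw [h1, integral_withDensity_eq_integral_smul
      ((measurable_exponentialPDFReal r).real_toNNReal) f]
  have h2 : ∀ x : ℝ, (exponentialPDFReal r x).toNNReal • f x
      = Set.indicator (Ici (0:ℝ)) (fun s => (r * Real.exp (-(r * s))) * f s) x := by
    intro x
    rw [NNReal.smul_def, Real.coe_toNNReal _ (exponentialPDFReal_nonneg hr x),
      exponentialPDFReal_eq']
    by_cases hx : 0 ≤ x
    · rw [if_pos hx, Set.indicator_of_mem (mem_Ici.2 hx), smul_eq_mul]
    · rw [if_neg hx, Set.indicator_of_notMem (by simpa using hx), smul_eq_mul, zero_mul]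
  simp_rw [h2]
  rw [integral_indicator measurableSet_Ici, integral_Ici_eq_integral_Ioi]

lemma hasDerivAt_exp_neg_mul (a s : ℝ) :
    HasDerivAt (fun s => Real.exp (-(a * s))) (-a * Real.exp (-(a * s))) s := by
  have h := (((hasDerivAt_id s).const_mul a).neg).exp
  simpa [mul_comm] using h

lemma tendsto_exp_neg_mul_atTop {a : ℝ} (ha : 0 < a) :
    Tendsto (fun s => Real.exp (-(a * s))) atTop (𝓝 0) := by
  have h1 : Tendsto (fun s : ℝ => a * s) atTop atTop :=
    Tendsto.const_mul_atTop ha tendsto_id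
  have := Real.tendsto_exp_neg_atTop_nhds_zero.comp h1
  simpa [Function.comp_def] using this

lemma integral_exp_neg_expMeasure {r a : ℝ} (hr : 0 < r) (ha : 0 < a) :
    ∫ s, Real.exp (-(a * s)) ∂(expMeasure r) = r / (r + a) := by
  rw [integral_expMeasure hr]
  have hra : (0:ℝ) < r + a := by linarith
  have hderiv : ∀ s ∈ Ici (0:ℝ),
      HasDerivAt (fun s => -(r / (r + a)) * Real.exp (-((r + a) * s)))
        ((r * Real.exp (-(r * s))) * Real.exp (-(a * s))) s := by
    intro s _
    have h := (hasDerivAt_exp_neg_mul (r + a) s).const_mul (-(r / (r + a)))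
    refine h.congr_deriv ?_
    symm
    rw [mul_assoc, ← Real.exp_add]
    have hs : -(r * s) + -(a * s) = -((r + a) * s) := by ring
    rw [hs]
    field_simp
  have hint : IntegrableOn (fun s => (r * Real.exp (-(r * s))) * Real.exp (-(a * s)))
      (Ioi (0:ℝ)) := by
    have : (fun s => (r * Real.exp (-(r * s))) * Real.exp (-(a * s)))
        = fun s => r * Real.exp (-(r + a) * s) := by
      funext s; rw [mul_assoc, ← Real.exp_add]; ring_nf
    rw [this]
    exact (exp_neg_integrableOn_Ioi 0 hra).const_mul r
  have htend : Tendsto (fun s => -(r / (r + a)) * Real.exp (-((r + a) * s))) atTop (𝓝 0) := by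
    have := (tendsto_exp_neg_mul_atTop hra).const_mul (-(r / (r + a)))
    simpa using this
  have := integral_Ioi_of_hasDerivAt_of_tendsto' hderiv hint htend
  rw [this]
  simp

lemma integral_key {r a u : ℝ} (hr : 0 < r) (ha : 0 < a) (hu : 0 ≤ u) (hu1 : u ≤ 1) :
    ∫ s, (1 - u * Real.exp (-(a * s))) * Real.exp (-(r / a * u * Real.exp (-(a * s))))
      ∂(expMeasure r)
      = Real.exp (-(r / a * u)) := by
  set c := r / a with hc
  have hca : c * a = r := div_mul_cancel₀ r ha.ne'
  have hcpos : 0 ≤ c := by positivity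
  rw [integral_expMeasure hr]
  have hderiv : ∀ s ∈ Ici (0:ℝ),
      HasDerivAt (fun s => -(Real.exp (-(r * s)) * Real.exp (-(c * u * Real.exp (-(a * s))))))
        ((r * Real.exp (-(r * s)))
          * ((1 - u * Real.exp (-(a * s))) * Real.exp (-(c * u * Real.exp (-(a * s)))))) s := by
    intro s _
    have hinner : HasDerivAt (fun s => -(c * u * Real.exp (-(a * s))))
        (c * u * a * Real.exp (-(a * s))) s := by
      have := ((hasDerivAt_exp_neg_mul a s).const_mul (c * u)).neg
      refine this.congr_deriv ?_; ring
    have h2 : HasDerivAt (fun s => Real.exp (-(c * u * Real.exp (-(a * s)))))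
        (Real.exp (-(c * u * Real.exp (-(a * s)))) * (c * u * a * Real.exp (-(a * s)))) s :=
      hinner.exp
    have h3 : HasDerivAt (fun s => Real.exp (-(r * s))) (-r * Real.exp (-(r * s))) s :=
      hasDerivAt_exp_neg_mul r s
    have h := (h3.mul h2).neg
    refine h.congr_deriv ?_
    have : c * u * a = r * u := by rw [mul_right_comm, hca]
    rw [this]
    ring
  have hint : IntegrableOn (fun s => (r * Real.exp (-(r * s)))
      * ((1 - u * Real.exp (-(a * s))) * Real.exp (-(c * u * Real.exp (-(a * s))))))
      (Ioi (0:ℝ)) := by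
    have hmeas : AEStronglyMeasurable (fun s => (r * Real.exp (-(r * s)))
        * ((1 - u * Real.exp (-(a * s))) * Real.exp (-(c * u * Real.exp (-(a * s))))))
        (volume.restrict (Ioi (0:ℝ))) := by
      apply Continuous.aestronglyMeasurable
      fun_prop
    refine Integrable.mono' ((exp_neg_integrableOn_Ioi 0 hr).const_mul r) hmeas ?_
    rw [ae_restrict_iff' measurableSet_Ioi]
    filter_upwards with s hs
    have hs0 : (0:ℝ) ≤ s := le_of_lt hs
    have he1 : Real.exp (-(a * s)) ≤ 1 := by
      rw [Real.exp_le_one_iff]; nlinarith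
    have he0 : (0:ℝ) < Real.exp (-(a * s)) := Real.exp_pos _
    have hf1 : 0 ≤ 1 - u * Real.exp (-(a * s)) := by nlinarith
    have hf2 : 1 - u * Real.exp (-(a * s)) ≤ 1 := by nlinarith
    have hg1 : Real.exp (-(c * u * Real.exp (-(a * s)))) ≤ 1 := by
      rw [Real.exp_le_one_iff]; nlinarith
    have hg0 : (0:ℝ) < Real.exp (-(c * u * Real.exp (-(a * s)))) := Real.exp_pos _
    rw [Real.norm_eq_abs, abs_of_nonneg (by positivity)]
    have : (0:ℝ) < r * Real.exp (-(r*s)) := by positivity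
    calc (r * Real.exp (-(r * s)))
        * ((1 - u * Real.exp (-(a * s))) * Real.exp (-(c * u * Real.exp (-(a * s)))))
        ≤ (r * Real.exp (-(r * s))) * 1 := by
          apply mul_le_mul_of_nonneg_left _ this.le
          nlinarith
      _ = r * Real.exp (-r * s) := by rw [mul_one, neg_mul]
  have htend : Tendsto (fun s => -(Real.exp (-(r * s))
      * Real.exp (-(c * u * Real.exp (-(a * s)))))) atTop (𝓝 0) := by
    have h1 : Tendsto (fun s => Real.exp (-(r * s))) atTop (𝓝 0) :=
      tendsto_exp_neg_mul_atTop hr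
    have h2 : Tendsto (fun s => Real.exp (-(c * u * Real.exp (-(a * s))))) atTop
        (𝓝 (Real.exp (-(c * u * 0)))) := by
      apply (Real.continuous_exp.tendsto _).comp
      have := (tendsto_exp_neg_mul_atTop ha).const_mul (c * u)
      have h3 : Tendsto (fun s => -(c * u * Real.exp (-(a * s)))) atTop (𝓝 (-(c * u * 0))) := by
        exact ((tendsto_exp_neg_mul_atTop ha).const_mul (c * u)).neg
      exact h3
    have := (h1.mul h2).neg
    simpa using this
  have := integral_Ioi_of_hasDerivAt_of_tendsto' hderiv hint htend
  rw [this]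
  simp

noncomputable def psum {n : ℕ} (w : Fin n → ℝ) (i : Fin n) : ℝ :=
  ∑ j : Fin n, if (j : ℕ) ≤ (i : ℕ) then w j else 0

lemma psum_eq_range {n : ℕ} (w : ℕ → ℝ) (i : Fin n) :
    psum (fun j : Fin n => w j) i = ∑ j ∈ Finset.range ((i : ℕ) + 1), w j := by
  rw [psum, Fin.sum_univ_eq_sum_range (fun j => if j ≤ (i : ℕ) then w j else 0) n,
    ← Finset.sum_filter]
  congr 1
  ext j
  have := i.isLt
  simp only [Finset.mem_filter, Finset.mem_range, Nat.lt_succ_iff]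
  omega

lemma psum_zero {n : ℕ} (w : Fin (n + 1) → ℝ) : psum w 0 = w 0 := by
  rw [psum, Fin.sum_univ_succ]
  simp

lemma psum_succ {n : ℕ} (w : Fin (n + 1) → ℝ) (k : Fin n) :
    psum w k.succ = w 0 + psum (fun j => w j.succ) k := by
  rw [psum, Fin.sum_univ_succ, psum]
  simp [Fin.val_succ, Nat.succ_le_succ_iff]

lemma psum_nonneg {n : ℕ} {w : Fin n → ℝ} (hw : ∀ j, 0 ≤ w j) (i : Fin n) :
    0 ≤ psum w i := by
  apply Finset.sum_nonneg
  intro j _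
  split_ifs
  · exact hw j
  · exact le_refl 0

lemma continuous_psum {n : ℕ} (i : Fin n) : Continuous (fun w : Fin n → ℝ => psum w i) := by
  apply continuous_finset_sum
  intro j _
  by_cases hj : (j : ℕ) ≤ (i : ℕ)
  · simp only [if_pos hj]; exact continuous_apply j
  · simp only [if_neg hj]; exact continuous_const

lemma pi_ae_nonneg {r : ℝ} (hr : 0 < r) (n : ℕ) :
    ∀ᵐ w ∂(Measure.pi fun _ : Fin n => expMeasure r), ∀ i, 0 ≤ w i := by
  haveI : IsProbabilityMeasure (expMeasure r) := isProbabilityMeasure_expMeasure hr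
  rw [ae_all_iff]
  intro i
  rw [ae_iff]
  have hset : {w : Fin n → ℝ | ¬ 0 ≤ w i}
      = Set.pi univ (fun j => if j = i then Iio 0 else univ) := by
    ext w
    simp only [mem_setOf_eq, Set.mem_pi, mem_univ, forall_true_left, not_le]
    constructor
    · intro hw j
      by_cases hj : j = i
      · subst hj; simp [hw]
      · simp [hj]
    · intro hw
      have := hw i
      simpa using this
  rw [hset, Measure.pi_pi]
  apply Finset.prod_eq_zero (Finset.mem_univ i)
  simp [expMeasure_Iio_zero]

/-- helper: single factor bounds -/
lemma factor_bounds {a u s : ℝ} (ha : 0 < a) (hu : 0 ≤ u) (hu1 : u ≤ 1) (hs : 0 ≤ s) :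
    0 ≤ 1 - u * Real.exp (-(a * s)) ∧ 1 - u * Real.exp (-(a * s)) ≤ 1 := by
  have he1 : Real.exp (-(a * s)) ≤ 1 := by rw [Real.exp_le_one_iff]; nlinarith
  have he0 : (0:ℝ) < Real.exp (-(a * s)) := Real.exp_pos _
  constructor <;> nlinarith

/-- The function `Q r a n u = E[∏_{i<n} (1 - u e^{-a S_i})]` for arrival sums `S_i` of
i.i.d. Exponential(r) interarrivals. -/
noncomputable def Q (r a : ℝ) (n : ℕ) (u : ℝ) : ℝ :=
  ∫ w : Fin n → ℝ, ∏ i, (1 - u * Real.exp (-(a * psum w i)))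
    ∂(Measure.pi fun _ : Fin n => expMeasure r)

lemma prod_factor_bounds {n : ℕ} {a u : ℝ} (ha : 0 < a) (hu : 0 ≤ u) (hu1 : u ≤ 1)
    {w : Fin n → ℝ} (hw : ∀ i, 0 ≤ w i) :
    0 ≤ ∏ i, (1 - u * Real.exp (-(a * psum w i)))
      ∧ ∏ i, (1 - u * Real.exp (-(a * psum w i))) ≤ 1 := by
  constructor
  · apply Finset.prod_nonneg
    intro i _
    exact (factor_bounds ha hu hu1 (psum_nonneg hw i)).1
  · apply Finset.prod_le_one
    · intro i _; exact (factor_bounds ha hu hu1 (psum_nonneg hw i)).1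
    · intro i _; exact (factor_bounds ha hu hu1 (psum_nonneg hw i)).2

lemma continuous_prodfun {n : ℕ} (a u : ℝ) :
    Continuous (fun w : Fin n → ℝ => ∏ i, (1 - u * Real.exp (-(a * psum w i)))) := by
  apply continuous_finset_prod
  intro i _
  have h1 : Continuous (fun w : Fin n → ℝ => Real.exp (-(a * psum w i))) :=
    Real.continuous_exp.comp ((continuous_const.mul (continuous_psum i)).neg)
  exact continuous_const.sub (continuous_const.mul h1)

lemma integrable_prodfun {n : ℕ} {r a u : ℝ} (hr : 0 < r) (ha : 0 < a)
    (hu : 0 ≤ u) (hu1 : u ≤ 1) :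
    Integrable (fun w : Fin n → ℝ => ∏ i, (1 - u * Real.exp (-(a * psum w i))))
      (Measure.pi fun _ : Fin n => expMeasure r) := by
  haveI : IsProbabilityMeasure (expMeasure r) := isProbabilityMeasure_expMeasure hr
  refine Integrable.mono' (integrable_const 1)
    (continuous_prodfun a u).aestronglyMeasurable ?_
  filter_upwards [pi_ae_nonneg hr n] with w hw
  rw [Real.norm_eq_abs, abs_of_nonneg (prod_factor_bounds ha hu hu1 hw).1]
  exact (prod_factor_bounds ha hu hu1 hw).2

lemma Q_zero (r a u : ℝ) [IsProbabilityMeasure (expMeasure r)] : Q r a 0 u = 1 := by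
  rw [Q]
  simp

lemma Q_nonneg {r a u : ℝ} (hr : 0 < r) (ha : 0 < a) (hu : 0 ≤ u) (hu1 : u ≤ 1) (n : ℕ) :
    0 ≤ Q r a n u := by
  apply integral_nonneg_of_ae
  filter_upwards [pi_ae_nonneg hr n] with w hw
  exact (prod_factor_bounds ha hu hu1 hw).1

lemma integrable_G {n : ℕ} {r a u : ℝ} (hr : 0 < r) (ha : 0 < a) (hu : 0 ≤ u) (hu1 : u ≤ 1) :
    Integrable (fun p : ℝ × (Fin n → ℝ) =>
      (1 - u * Real.exp (-(a * p.1)))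
        * ∏ i, (1 - u * Real.exp (-(a * p.1)) * Real.exp (-(a * psum p.2 i))))
      ((expMeasure r).prod (Measure.pi fun _ : Fin n => expMeasure r)) := by
  haveI : IsProbabilityMeasure (expMeasure r) := isProbabilityMeasure_expMeasure hr
  have hc1 : Continuous (fun p : ℝ × (Fin n → ℝ) => Real.exp (-(a * p.1))) :=
    Real.continuous_exp.comp ((continuous_const.mul continuous_fst).neg)
  have hcont : Continuous (fun p : ℝ × (Fin n → ℝ) =>
      (1 - u * Real.exp (-(a * p.1)))
        * ∏ i, (1 - u * Real.exp (-(a * p.1)) * Real.exp (-(a * psum p.2 i)))) := by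
    apply (continuous_const.sub (continuous_const.mul hc1)).mul
    apply continuous_finset_prod
    intro i _
    exact continuous_const.sub ((continuous_const.mul hc1).mul
      (Real.continuous_exp.comp
        ((continuous_const.mul ((continuous_psum i).comp continuous_snd)).neg)))
  have hae : ∀ᵐ p : ℝ × (Fin n → ℝ)
      ∂((expMeasure r).prod (Measure.pi fun _ : Fin n => expMeasure r)),
      0 ≤ p.1 ∧ ∀ i, 0 ≤ p.2 i := by
    rw [ae_iff]
    have hsub : {p : ℝ × (Fin n → ℝ) | ¬(0 ≤ p.1 ∧ ∀ i, 0 ≤ p.2 i)}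
        ⊆ (Iio (0:ℝ) ×ˢ (univ : Set (Fin n → ℝ)))
          ∪ ((univ : Set ℝ) ×ˢ {w : Fin n → ℝ | ¬ ∀ i, 0 ≤ w i}) := by
      intro p hp
      simp only [mem_setOf_eq, not_and_or] at hp
      rcases hp with hp | hp
      · exact Or.inl ⟨not_le.1 hp, mem_univ _⟩
      · exact Or.inr ⟨mem_univ _, hp⟩
    refine measure_mono_null hsub (measure_union_null ?_ ?_)
    · rw [Measure.prod_prod, expMeasure_Iio_zero, zero_mul]
    · rw [Measure.prod_prod]
      have := pi_ae_nonneg (r := r) hr n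
      rw [ae_iff] at this
      rw [this, mul_zero]
  refine Integrable.mono' (integrable_const 1) hcont.aestronglyMeasurable ?_
  filter_upwards [hae] with p hp
  obtain ⟨hp1, hp2⟩ := hp
  have he1 : Real.exp (-(a * p.1)) ≤ 1 := by rw [Real.exp_le_one_iff]; nlinarith
  have he0 : (0:ℝ) < Real.exp (-(a * p.1)) := Real.exp_pos _
  have hu' : 0 ≤ u * Real.exp (-(a * p.1)) := by positivity
  have hu'1 : u * Real.exp (-(a * p.1)) ≤ 1 := by nlinarith
  have hprod := prod_factor_bounds (w := p.2) ha hu' hu'1 hp2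
  have hf := factor_bounds (s := p.1) ha hu hu1 hp1
  rw [Real.norm_eq_abs, abs_of_nonneg (mul_nonneg hf.1 hprod.1)]
  calc (1 - u * Real.exp (-(a * p.1)))
      * ∏ i, (1 - u * Real.exp (-(a * p.1)) * Real.exp (-(a * psum p.2 i)))
      ≤ 1 * 1 := by
        apply mul_le_mul hf.2 hprod.2 hprod.1 zero_le_one
    _ = 1 := one_mul 1

lemma Q_succ {r a : ℝ} (hr : 0 < r) (ha : 0 < a) (n : ℕ) {u : ℝ} (hu : 0 ≤ u) (hu1 : u ≤ 1) :
    Q r a (n + 1) u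
      = ∫ s, (1 - u * Real.exp (-(a * s))) * Q r a n (u * Real.exp (-(a * s)))
          ∂(expMeasure r) := by
  haveI : IsProbabilityMeasure (expMeasure r) := isProbabilityMeasure_expMeasure hr
  have mp := measurePreserving_piFinSuccAbove (fun _ : Fin (n + 1) => expMeasure r) 0
  have step1 : Q r a (n + 1) u
      = ∫ p : ℝ × (Fin n → ℝ),
          (1 - u * Real.exp (-(a * p.1)))
            * ∏ i, (1 - u * Real.exp (-(a * p.1)) * Real.exp (-(a * psum p.2 i)))
          ∂((expMeasure r).prod (Measure.pi fun _ : Fin n => expMeasure r)) := by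
    rw [Q, ← mp.map_eq, MeasureTheory.integral_map_equiv]
    apply integral_congr_ae
    apply ae_of_all
    intro w
    simp only [MeasurableEquiv.piFinSuccAbove_apply, Fin.insertNthEquiv,
      Equiv.coe_fn_symm_mk]
    rw [Fin.prod_univ_succ]
    congr 1
    · rw [psum_zero]
    · apply Finset.prod_congr rfl
      intro k _
      have hrm : Fin.removeNth 0 w = fun j => w j.succ := rfl
      have hps : psum w k.succ = w 0 + psum (fun j => w j.succ) k := psum_succ w k
      rw [hrm, hps]
      have : -(a * (w 0 + psum (fun j => w j.succ) k))
          = -(a * w 0) + -(a * psum (fun j => w j.succ) k) := by ring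
      rw [this, Real.exp_add]
      ring_nf
  rw [step1, integral_prod _ (integrable_G hr ha hu hu1)]
  apply integral_congr_ae
  apply ae_of_all
  intro s
  dsimp only
  rw [MeasureTheory.integral_const_mul]
  rfl

lemma Q_bound {r a : ℝ} (hr : 0 < r) (ha : 0 < a) :
    ∀ n : ℕ, ∀ u : ℝ, 0 ≤ u → u ≤ 1 →
      |Q r a n u - Real.exp (-(r / a * u))| ≤ (r / a) * (r / (r + a)) ^ n * u := by
  haveI : IsProbabilityMeasure (expMeasure r) := isProbabilityMeasure_expMeasure hr
  intro n
  induction n with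
  | zero =>
    intro u hu hu1
    rw [Q_zero, pow_zero]
    have hc : (0:ℝ) ≤ r / a * u := by positivity
    have h1 : Real.exp (-(r / a * u)) ≤ 1 := by rw [Real.exp_le_one_iff]; linarith
    have h2 : 1 - r / a * u ≤ Real.exp (-(r / a * u)) := by
      have := Real.add_one_le_exp (-(r / a * u)); linarith
    rw [abs_of_nonneg (by linarith)]
    nlinarith
  | succ n ih =>
    intro u hu hu1
    have hG := integrable_G (n := n) (r := r) (a := a) hr ha hu hu1
    have hint1 : Integrable
        (fun s => (1 - u * Real.exp (-(a * s))) * Q r a n (u * Real.exp (-(a * s))))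
        (expMeasure r) := by
      have h := hG.integral_prod_left
      refine h.congr (ae_of_all _ ?_)
      intro s
      dsimp only
      rw [MeasureTheory.integral_const_mul]
      rfl
    have hint2 : Integrable
        (fun s => (1 - u * Real.exp (-(a * s)))
          * Real.exp (-(r / a * (u * Real.exp (-(a * s)))))) (expMeasure r) := by
      refine Integrable.mono' (integrable_const 1)
        (Continuous.aestronglyMeasurable (by fun_prop)) ?_
      filter_upwards [expMeasure_ae_nonneg r] with s hs
      have hf := factor_bounds (s := s) ha hu hu1 hs
      have hg1 : Real.exp (-(r / a * (u * Real.exp (-(a * s))))) ≤ 1 := by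
        rw [Real.exp_le_one_iff]
        have : (0:ℝ) ≤ r / a * (u * Real.exp (-(a * s))) := by positivity
        linarith
      have hg0 : (0:ℝ) < Real.exp (-(r / a * (u * Real.exp (-(a * s))))) := Real.exp_pos _
      rw [Real.norm_eq_abs, abs_of_nonneg (mul_nonneg hf.1 hg0.le)]
      nlinarith [hf.1, hf.2]
    have hint3 : Integrable (fun s => Real.exp (-(a * s))) (expMeasure r) := by
      refine Integrable.mono' (integrable_const 1)
        (Continuous.aestronglyMeasurable (by fun_prop)) ?_
      filter_upwards [expMeasure_ae_nonneg r] with s hs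
      rw [Real.norm_eq_abs, abs_of_nonneg (Real.exp_pos _).le, Real.exp_le_one_iff]
      nlinarith
    have hkey : ∫ s, (1 - u * Real.exp (-(a * s)))
        * Real.exp (-(r / a * (u * Real.exp (-(a * s))))) ∂(expMeasure r)
        = Real.exp (-(r / a * u)) := by
      have h := integral_key (r := r) (a := a) (u := u) hr ha hu hu1
      rw [← h]
      apply integral_congr_ae; apply ae_of_all; intro s
      dsimp only
      rw [mul_assoc]
    rw [Q_succ hr ha n hu hu1, ← hkey, ← integral_sub hint1 hint2]
    have hbound : ∀ᵐ s ∂(expMeasure r),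
        ‖(1 - u * Real.exp (-(a * s))) * Q r a n (u * Real.exp (-(a * s)))
          - (1 - u * Real.exp (-(a * s)))
            * Real.exp (-(r / a * (u * Real.exp (-(a * s)))))‖
        ≤ (r / a * (r / (r + a)) ^ n * u) * Real.exp (-(a * s)) := by
      filter_upwards [expMeasure_ae_nonneg r] with s hs
      have he1 : Real.exp (-(a * s)) ≤ 1 := by rw [Real.exp_le_one_iff]; nlinarith
      have he0 : (0:ℝ) < Real.exp (-(a * s)) := Real.exp_pos _
      have hu' : 0 ≤ u * Real.exp (-(a * s)) := by positivity
      have hu'1 : u * Real.exp (-(a * s)) ≤ 1 := by nlinarith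
      have hih := ih (u * Real.exp (-(a * s))) hu' hu'1
      have hf := factor_bounds (s := s) ha hu hu1 hs
      rw [← mul_sub, Real.norm_eq_abs, abs_mul]
      calc |1 - u * Real.exp (-(a * s))|
          * |Q r a n (u * Real.exp (-(a * s)))
            - Real.exp (-(r / a * (u * Real.exp (-(a * s)))))|
          ≤ 1 * (r / a * (r / (r + a)) ^ n * (u * Real.exp (-(a * s)))) := by
            apply mul_le_mul _ hih (abs_nonneg _) zero_le_one
            rw [abs_of_nonneg hf.1]; exact hf.2
        _ = (r / a * (r / (r + a)) ^ n * u) * Real.exp (-(a * s)) := by ring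
    have hle := norm_integral_le_of_norm_le (hint3.const_mul (r / a * (r / (r + a)) ^ n * u))
      hbound
    rw [Real.norm_eq_abs] at hle
    refine hle.trans ?_
    rw [MeasureTheory.integral_const_mul, integral_exp_neg_expMeasure hr ha]
    rw [pow_succ]
    ring_nf
    exact le_refl _

lemma map_eq_expMeasure {Ω : Type*} [MeasurableSpace Ω] (P : Measure Ω) [IsProbabilityMeasure P]
    {r : ℝ} (hr : 0 < r) (f : Ω → ℝ) (hf : Measurable f)
    (hd : ∀ s : ℝ, 0 ≤ s → P {ω | f ω ≤ s} = ENNReal.ofReal (1 - Real.exp (-(r * s)))) :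
    Measure.map f P = expMeasure r := by
  haveI : IsProbabilityMeasure (Measure.map f P) := Measure.isProbabilityMeasure_map hf.aemeasurable
  refine MeasureTheory.Measure.ext_of_Iic (Measure.map f P) (expMeasure r) (fun s => ?_)
  rw [Measure.map_apply hf measurableSet_Iic, expMeasure_Iic hr]
  have hpre : f ⁻¹' Iic s = {ω | f ω ≤ s} := rfl
  rw [hpre]
  by_cases hs : 0 ≤ s
  · rw [if_pos hs, hd s hs]
  · rw [if_neg hs, ENNReal.ofReal_zero]
    have hsub : {ω | f ω ≤ s} ⊆ {ω | f ω ≤ 0} := by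
      intro ω hω; exact le_trans hω (le_of_not_ge hs)
    refine le_antisymm ?_ zero_le
    have h0 := hd 0 le_rfl
    rw [mul_zero, neg_zero, Real.exp_zero, sub_self, ENNReal.ofReal_zero] at h0
    exact h0 ▸ measure_mono hsub

lemma map_pi_eq {Ω : Type*} [MeasurableSpace Ω] (P : Measure Ω) [IsProbabilityMeasure P]
    {κ : Type*} [Fintype κ] {ι : Type*}
    (F : ι → Ω → ℝ) (hF : ∀ i, Measurable (F i))
    (e : κ → ι) (he : Function.Injective e)
    (hindep : iIndepFun F P) :
    Measure.map (fun ω (j : κ) => F (e j) ω) P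
      = Measure.pi (fun j : κ => Measure.map (F (e j)) P) := by
  classical
  haveI : ∀ j : κ, IsProbabilityMeasure (Measure.map (F (e j)) P) :=
    fun j => Measure.isProbabilityMeasure_map (hF (e j)).aemeasurable
  symm
  refine (Measure.pi_eq fun s hs => ?_)
  have hmeasF : Measurable (fun ω (j : κ) => F (e j) ω) :=
    measurable_pi_lambda _ fun j => hF (e j)
  rw [Measure.map_apply hmeasF (MeasurableSet.univ_pi hs)]
  set sets : ι → Set ℝ := fun i => if hi : ∃ j, e j = i then s hi.choose else univ with hsets
  have hse : ∀ j, sets (e j) = s j := by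
    intro j
    have hex : ∃ j', e j' = e j := ⟨j, rfl⟩
    simp only [hsets, dif_pos hex]
    rw [he hex.choose_spec]
  have hmeas : ∀ i, i ∈ Finset.univ.image e → MeasurableSet (sets i) := by
    intro i hi
    simp only [Finset.mem_image, Finset.mem_univ, true_and] at hi
    obtain ⟨j, rfl⟩ := hi
    rw [hse]; exact hs j
  have key := hindep.measure_inter_preimage_eq_mul (Finset.univ.image e) hmeas
  have hpre : (fun ω (j : κ) => F (e j) ω) ⁻¹' (Set.pi univ s)
      = ⋂ i ∈ Finset.univ.image e, F i ⁻¹' sets i := by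
    ext ω
    simp only [mem_preimage, Set.mem_pi, mem_univ, forall_true_left, mem_iInter,
      Finset.mem_image, Finset.mem_univ, true_and]
    constructor
    · rintro hω i ⟨j, rfl⟩
      rw [hse]; exact hω j
    · intro hω j
      have := hω (e j) ⟨j, rfl⟩
      rwa [hse] at this
  rw [hpre, key, Finset.prod_image (fun j _ k _ hjk => he hjk)]
  apply Finset.prod_congr rfl
  intro j _
  rw [hse, Measure.map_apply (hF (e j)) (hs j)]

lemma measure_En {Ω : Type*} [MeasurableSpace Ω] (P : Measure Ω) [IsProbabilityMeasure P]
    {lam mu t : ℝ} (hlam : 0 < lam) (hmu : 0 < mu) (ht : 0 < t)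
    (g h : ℕ → Ω → ℝ)
    (hgm : ∀ i, Measurable (g i)) (hhm : ∀ i, Measurable (h i))
    (hindep : iIndepFun (Sum.elim g h) P)
    (hgmap : ∀ i, Measure.map (g i) P = expMeasure lam)
    (hhmap : ∀ i, Measure.map (h i) P = expMeasure mu)
    (n : ℕ) :
    P (⋂ i : Fin n, {ω | h i ω ≤ t * ∑ j ∈ Finset.range ((i : ℕ) + 1), g j ω})
      = ENNReal.ofReal (Q lam (mu * t) n 1) := by
  classical
  haveI : IsProbabilityMeasure (expMeasure lam) := isProbabilityMeasure_expMeasure hlam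
  haveI : IsProbabilityMeasure (expMeasure mu) := isProbabilityMeasure_expMeasure hmu
  have hamul : 0 < mu * t := mul_pos hmu ht
  set emb : Fin n ⊕ Fin n → ℕ ⊕ ℕ := Sum.map Fin.val Fin.val with hembdef
  have hembinj : Function.Injective emb := by
    rintro (j | j) (k | k) hjk <;>
      simp only [hembdef, Sum.map_inl, Sum.map_inr, Sum.inl.injEq, Sum.inr.injEq,
        reduceCtorEq] at hjk
    · exact congrArg Sum.inl (Fin.val_injective hjk)
    · exact congrArg Sum.inr (Fin.val_injective hjk)
  have hFm : ∀ i : ℕ ⊕ ℕ, Measurable (Sum.elim g h i) := by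
    rintro (i | i)
    · exact hgm i
    · exact hhm i
  have hmap := map_pi_eq P (Sum.elim g h) hFm emb hembinj hindep
  set B : Set ((Fin n ⊕ Fin n) → ℝ) :=
    ⋂ i : Fin n, {v | v (Sum.inr i) ≤ t * psum (fun j => v (Sum.inl j)) i} with hBdef
  have hpsm : ∀ i : Fin n, Measurable
      (fun v : (Fin n ⊕ Fin n) → ℝ => psum (fun j => v (Sum.inl j)) i) := by
    intro i
    exact (continuous_psum i).measurable.comp
      (measurable_pi_lambda _ fun j => measurable_pi_apply _)
  have hB : MeasurableSet B := by
    apply MeasurableSet.iInter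
    intro i
    exact measurableSet_le (measurable_pi_apply _) (measurable_const.mul (hpsm i))
  have hmeasF : Measurable (fun ω (j : Fin n ⊕ Fin n) => Sum.elim g h (emb j) ω) :=
    measurable_pi_lambda _ fun j => hFm (emb j)
  have hpre : (fun ω (j : Fin n ⊕ Fin n) => Sum.elim g h (emb j) ω) ⁻¹' B
      = ⋂ i : Fin n, {ω | h i ω ≤ t * ∑ j ∈ Finset.range ((i : ℕ) + 1), g j ω} := by
    ext ω
    simp only [mem_preimage, hBdef, mem_iInter, mem_setOf_eq]
    apply forall_congr'
    intro i
    have : psum (fun j : Fin n => g (j : ℕ) ω) i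
        = ∑ j ∈ Finset.range ((i : ℕ) + 1), g j ω := psum_eq_range (fun m => g m ω) i
    rw [hembdef]
    simp only [Sum.map_inl, Sum.map_inr, Sum.elim_inl, Sum.elim_inr]
    rw [this]
  rw [← hpre, ← Measure.map_apply hmeasF hB, hmap]
  set μs : Fin n ⊕ Fin n → Measure ℝ :=
    Sum.elim (fun _ : Fin n => expMeasure lam) (fun _ : Fin n => expMeasure mu) with hμs
  have hμseq : (fun j : Fin n ⊕ Fin n => Measure.map (Sum.elim g h (emb j)) P) = μs := by
    funext j
    cases j with
    | inl i => exact hgmap i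
    | inr i => exact hhmap i
  rw [hμseq]
  haveI : ∀ j : Fin n ⊕ Fin n, IsProbabilityMeasure (μs j) := by
    rintro (i | i)
    · exact isProbabilityMeasure_expMeasure hlam
    · exact isProbabilityMeasure_expMeasure hmu
  have mp2 := measurePreserving_sumPiEquivProdPi_symm μs
  rw [← mp2.map_eq, Measure.map_apply (MeasurableEquiv.measurable _) hB]
  have hC : (MeasurableEquiv.sumPiEquivProdPi (fun _ : Fin n ⊕ Fin n => ℝ)).symm ⁻¹' B
      = ⋂ i : Fin n, {p : (Fin n → ℝ) × (Fin n → ℝ) | p.2 i ≤ t * psum p.1 i} := by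
    ext p
    simp only [mem_preimage, hBdef, mem_iInter, mem_setOf_eq,
      MeasurableEquiv.coe_sumPiEquivProdPi_symm]
    rfl
  rw [hC]
  have hCm : MeasurableSet
      (⋂ i : Fin n, {p : (Fin n → ℝ) × (Fin n → ℝ) | p.2 i ≤ t * psum p.1 i}) := by
    apply MeasurableSet.iInter
    intro i
    have h1 : Measurable fun p : (Fin n → ℝ) × (Fin n → ℝ) => p.2 i :=
      (measurable_pi_apply i).comp measurable_snd
    have h2 : Measurable fun p : (Fin n → ℝ) × (Fin n → ℝ) => t * psum p.1 i :=
      measurable_const.mul ((continuous_psum i).measurable.comp measurable_fst)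
    exact measurableSet_le h1 h2
  rw [Measure.prod_apply hCm]
  have hslice : ∀ w : Fin n → ℝ,
      (Prod.mk w ⁻¹' ⋂ i : Fin n, {p : (Fin n → ℝ) × (Fin n → ℝ) | p.2 i ≤ t * psum p.1 i})
        = Set.pi univ (fun i => Iic (t * psum w i)) := by
    intro w
    ext z
    simp only [mem_preimage, mem_iInter, mem_setOf_eq, Set.mem_pi, mem_univ, forall_true_left,
      mem_Iic]
  have hμsl : (fun i : Fin n => μs (Sum.inl i)) = fun _ => expMeasure lam := rfl
  have hμsr : (fun i : Fin n => μs (Sum.inr i)) = fun _ => expMeasure mu := rfl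
  rw [hμsl, hμsr]
  calc ∫⁻ w, (Measure.pi fun _ : Fin n => expMeasure mu)
        (Prod.mk w ⁻¹' ⋂ i : Fin n, {p : (Fin n → ℝ) × (Fin n → ℝ) | p.2 i ≤ t * psum p.1 i})
        ∂(Measure.pi fun _ : Fin n => expMeasure lam)
      = ∫⁻ w, ∏ i, expMeasure mu (Iic (t * psum w i))
          ∂(Measure.pi fun _ : Fin n => expMeasure lam) := by
        apply lintegral_congr
        intro w
        rw [hslice w, Measure.pi_pi]
    _ = ∫⁻ w, ENNReal.ofReal (∏ i, (1 - 1 * Real.exp (-(mu * t * psum w i))))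
          ∂(Measure.pi fun _ : Fin n => expMeasure lam) := by
        apply lintegral_congr_ae
        filter_upwards [pi_ae_nonneg hlam n] with w hw
        have hnn : ∀ i, i ∈ (Finset.univ : Finset (Fin n))
            → 0 ≤ 1 - 1 * Real.exp (-(mu * t * psum w i)) := by
          intro i _
          exact (factor_bounds hamul zero_le_one le_rfl (psum_nonneg hw i)).1
        rw [ENNReal.ofReal_prod_of_nonneg hnn]
        apply Finset.prod_congr rfl
        intro i _
        have hps : 0 ≤ t * psum w i := mul_nonneg ht.le (psum_nonneg hw i)
        rw [expMeasure_Iic hmu, if_pos hps]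
        congr 1
        rw [one_mul, mul_assoc]
    _ = ENNReal.ofReal (Q lam (mu * t) n 1) := by
        rw [Q]
        rw [ofReal_integral_eq_lintegral_ofReal
          (integrable_prodfun hlam hamul zero_le_one le_rfl)]
        filter_upwards [pi_ae_nonneg hlam n] with w hw
        exact (prod_factor_bounds hamul zero_le_one le_rfl hw).1

end BlockageAux

/-- M/M case: for a homogeneous PPP on (0,∞) with intensity λ
(arrival-time representation) and i.i.d. Exponential(μ) marks independent of it,
tan θ = sup_i h_i/x_i is Fréchet(1, ρ) with ρ = λ/μ: P[tan θ ≤ t] = exp(−ρ/t). -/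
theorem blockage_tangent_frechet
    {Ω : Type*} [MeasurableSpace Ω] (P : Measure Ω) [IsProbabilityMeasure P]
    (lam mu : ℝ) (hlam : 0 < lam) (hmu : 0 < mu)
    (g h : ℕ → Ω → ℝ)
    (hgm : ∀ i, Measurable (g i)) (hhm : ∀ i, Measurable (h i))
    (hindep : iIndepFun (Sum.elim g h) P)
    (hgd : ∀ i, ∀ s : ℝ, 0 ≤ s →
      P {ω | g i ω ≤ s} = ENNReal.ofReal (1 - Real.exp (-(lam * s))))
    (hhd : ∀ i, ∀ s : ℝ, 0 ≤ s →
      P {ω | h i ω ≤ s} = ENNReal.ofReal (1 - Real.exp (-(mu * s))))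
    (x : ℕ → Ω → ℝ)
    (hx : ∀ i ω, x i ω = ∑ j ∈ Finset.range (i + 1), g j ω)
    (rho : ℝ) (hrho : rho = lam / mu)
    (t : ℝ) (ht : 0 < t) :
    P {ω | ∀ i, h i ω / x i ω ≤ t} = ENNReal.ofReal (Real.exp (-rho / t)) := by

  classical
  have ha : 0 < mu * t := mul_pos hmu ht
  have hgmap : ∀ i, Measure.map (g i) P = expMeasure lam := fun i =>
    BlockageAux.map_eq_expMeasure P hlam (g i) (hgm i) (hgd i)
  have hhmap : ∀ i, Measure.map (h i) P = expMeasure mu := fun i =>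
    BlockageAux.map_eq_expMeasure P hmu (h i) (hhm i) (hhd i)
  have hxm : ∀ i, Measurable (x i) := by
    intro i
    have hxe : x i = fun ω => ∑ j ∈ Finset.range (i + 1), g j ω := funext fun ω => hx i ω
    rw [hxe]
    exact Finset.measurable_sum _ (fun j _ => hgm j)
  set E : ℕ → Set Ω := fun n => ⋂ i : Fin n, {ω | h i ω ≤ t * x i ω} with hE
  have hEval : ∀ n, P (E n) = ENNReal.ofReal (BlockageAux.Q lam (mu * t) n 1) := by
    intro n
    have hset : E n
        = ⋂ i : Fin n, {ω | h i ω ≤ t * ∑ j ∈ Finset.range ((i : ℕ) + 1), g j ω} := by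
      rw [hE]
      apply iInter_congr
      intro i
      ext ω
      simp [hx]
    rw [hset]
    exact BlockageAux.measure_En P hlam hmu ht g h hgm hhm hindep hgmap hhmap n
  have hEm : ∀ n, MeasurableSet (E n) := fun n =>
    MeasurableSet.iInter fun i => measurableSet_le (hhm i) (measurable_const.mul (hxm i))
  have hanti : Antitone E := by
    intro m n hmn ω hω
    rw [hE, mem_iInter] at hω ⊢
    intro i
    exact hω ⟨i.1, lt_of_lt_of_le i.2 hmn⟩
  have hInter : ⋂ n, E n = {ω | ∀ i : ℕ, h i ω ≤ t * x i ω} := by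
    ext ω
    simp only [hE, mem_iInter, mem_setOf_eq]
    constructor
    · intro H i
      exact H (i + 1) ⟨i, Nat.lt_succ_self i⟩
    · intro H n i
      exact H i
  have htendQ : Filter.Tendsto (fun n => BlockageAux.Q lam (mu * t) n 1) Filter.atTop
      (nhds (Real.exp (-(lam / (mu * t))))) := by
    have hβ0 : (0:ℝ) ≤ lam / (lam + mu * t) := by positivity
    have hβ1 : lam / (lam + mu * t) < 1 := by
      rw [div_lt_one (by positivity)]; linarith
    have hg0 : Filter.Tendsto (fun n : ℕ => (lam / (mu * t)) * (lam / (lam + mu * t)) ^ n)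
        Filter.atTop (nhds 0) := by
      have := (tendsto_pow_atTop_nhds_zero_of_lt_one hβ0 hβ1).const_mul (lam / (mu * t))
      simpa using this
    have hnorm : ∀ n, ‖BlockageAux.Q lam (mu * t) n 1 - Real.exp (-(lam / (mu * t)))‖
        ≤ (lam / (mu * t)) * (lam / (lam + mu * t)) ^ n := by
      intro n
      have hb := BlockageAux.Q_bound hlam ha n 1 zero_le_one le_rfl
      rw [Real.norm_eq_abs]
      simpa using hb
    have h0 := squeeze_zero_norm hnorm hg0
    have := h0.add_const (Real.exp (-(lam / (mu * t))))
    simpa using this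
  have htendP : Filter.Tendsto (fun n => P (E n)) Filter.atTop
      (nhds (ENNReal.ofReal (Real.exp (-(lam / (mu * t)))))) := by
    have hfe : (fun n => P (E n)) = fun n => ENNReal.ofReal (BlockageAux.Q lam (mu * t) n 1) :=
      funext hEval
    rw [hfe]
    exact (ENNReal.continuous_ofReal.tendsto _).comp htendQ
  have htendP2 : Filter.Tendsto (fun n => P (E n)) Filter.atTop (nhds (P (⋂ n, E n))) :=
    tendsto_measure_iInter_atTop (fun n => (hEm n).nullMeasurableSet) hanti
      ⟨0, measure_ne_top P _⟩
  have hPInter : P (⋂ n, E n) = ENNReal.ofReal (Real.exp (-(lam / (mu * t)))) :=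
    tendsto_nhds_unique htendP2 htendP
  have hgae : ∀ i : ℕ, ∀ᵐ ω ∂P, 0 < g i ω := by
    intro i
    rw [ae_iff]
    have hset : {ω | ¬ 0 < g i ω} = {ω | g i ω ≤ 0} := by ext ω; simp [not_lt]
    rw [hset]
    have h0 := hgd i 0 le_rfl
    simpa using h0
  have hhae : ∀ i : ℕ, ∀ᵐ ω ∂P, 0 < h i ω := by
    intro i
    rw [ae_iff]
    have hset : {ω | ¬ 0 < h i ω} = {ω | h i ω ≤ 0} := by ext ω; simp [not_lt]
    rw [hset]
    have h0 := hhd i 0 le_rfl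
    simpa using h0
  have hae : ∀ᵐ ω ∂P, (∀ i, 0 < g i ω) ∧ (∀ i, 0 < h i ω) :=
    (ae_all_iff.2 hgae).and (ae_all_iff.2 hhae)
  have hsetEq : {ω | ∀ i, h i ω / x i ω ≤ t} =ᵐ[P] ⋂ n, E n := by
    apply Filter.eventuallyEq_set.2
    filter_upwards [hae] with ω hω
    rw [hInter]
    simp only [mem_setOf_eq]
    have hxpos : ∀ i, 0 < x i ω := by
      intro i
      rw [hx]
      exact Finset.sum_pos (fun j _ => hω.1 j) ⟨0, Finset.mem_range.2 (Nat.succ_pos i)⟩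
    constructor
    · intro H i
      have := H i
      rwa [div_le_iff₀ (hxpos i)] at this
    · intro H i
      rw [div_le_iff₀ (hxpos i)]
      exact H i
  rw [measure_congr hsetEq, hPInter]
  congr 1
  rw [hrho, neg_div, div_div]
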